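/- Let D be a division ring, A : Matrix m n D with m, n finite, and k ≤ |m|, k ≤ |n|. Suppose there are injections S : Fin k ↪ m and T : Fin k ↪ n such that the k×k submatrix A.submatrix S T is invertible, while every (k+1)×(k+1) square submatrix of A is not invertible. Then every column of A is a right linear combination of the columns indexed by T; that is, for every r : n there exist coefficients c : Fin k → D such that A i r = ∑ t, A i (T t) * c t for all i : m. -/

import Mathlib

set_option maxHeartbeats 1000000

open Matrix

section Aux

variable {α : Type*} [Ring α] {p q : Type*} [Fintype p] [Fintype q] [DecidableEq p] [DecidableEq q]

/-- A block matrix with invertible top-left block and invertible Schur complement is a unit,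
over a possibly noncommutative ring. -/
theorem aux_isUnit_fromBlocks (A : Matrix p p α) (B : Matrix p q α) (C : Matrix q p α)
    (Dm : Matrix q q α) [Invertible A] [Invertible (Dm - C * ⅟A * B)] :
    IsUnit (fromBlocks A B C Dm) := by
  have hdecomp : fromBlocks A B C Dm =
      fromBlocks 1 0 (C * ⅟A) 1 * fromBlocks A 0 0 (Dm - C * ⅟A * B) *
        fromBlocks 1 (⅟A * B) 0 1 := by
    simp only [fromBlocks_multiply, Matrix.mul_zero, Matrix.zero_mul, add_zero, zero_add,
      Matrix.one_mul, Matrix.mul_one, invOf_mul_self, Matrix.mul_invOf_cancel_left,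
      Matrix.invOf_mul_cancel_right, Matrix.mul_assoc, add_sub_cancel]
  rw [hdecomp]
  have h1 : IsUnit (fromBlocks (1 : Matrix p p α) (0 : Matrix p q α) (C * ⅟A) 1) := by
    refine isUnit_iff_exists.mpr ⟨fromBlocks (1 : Matrix p p α) 0 (-(C * ⅟A)) 1, ?_, ?_⟩ <;>
      simp [fromBlocks_multiply, fromBlocks_one, Matrix.neg_mul, add_neg_cancel, neg_add_cancel]
  have h2 : IsUnit (fromBlocks A (0 : Matrix p q α) 0 (Dm - C * ⅟A * B)) := by
    refine isUnit_iff_exists.mpr ⟨fromBlocks (⅟A) 0 0 (⅟(Dm - C * ⅟A * B)), ?_, ?_⟩ <;>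
      simp [fromBlocks_multiply, fromBlocks_one]
  have h3 : IsUnit (fromBlocks (1 : Matrix p p α) (⅟A * B) (0 : Matrix q p α) 1) := by
    refine isUnit_iff_exists.mpr ⟨fromBlocks (1 : Matrix p p α) (-(⅟A * B)) 0 1, ?_, ?_⟩ <;>
      simp [fromBlocks_multiply, fromBlocks_one, Matrix.neg_mul, add_neg_cancel, neg_add_cancel]
  exact (h1.mul h2).mul h3

/-- Version with explicit inverses. -/
theorem aux_isUnit_fromBlocks' (A : Matrix p p α) (B : Matrix p q α) (C : Matrix q p α)
    (Dm : Matrix q q α) (A' : Matrix p p α) (E' : Matrix q q α)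
    (hA1 : A' * A = 1) (hA2 : A * A' = 1)
    (hE1 : E' * (Dm - C * A' * B) = 1) (hE2 : (Dm - C * A' * B) * E' = 1) :
    IsUnit (fromBlocks A B C Dm) := by
  letI : Invertible A := ⟨A', hA1, hA2⟩
  have hinv : ⅟A = A' := rfl
  letI : Invertible (Dm - C * ⅟A * B) := by rw [hinv]; exact ⟨E', hE1, hE2⟩
  exact aux_isUnit_fromBlocks A B C Dm

theorem aux_isUnit_submatrix_equiv {l : Type*} [Fintype l] [DecidableEq l]
    {M : Matrix p p α} (e : l ≃ p) (hM : IsUnit M) : IsUnit (M.submatrix e e) := by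
  obtain ⟨⟨M', Minv, hMi1, hMi2⟩, rfl⟩ := hM
  refine isUnit_iff_exists.mpr ⟨Minv.submatrix e e, ?_, ?_⟩
  · rw [Matrix.submatrix_mul_equiv, hMi1, Matrix.submatrix_one_equiv]
  · rw [Matrix.submatrix_mul_equiv, hMi2, Matrix.submatrix_one_equiv]

end Aux

theorem stmt_3 {D : Type*} [DivisionRing D] {m n : Type*} [Fintype m] [Fintype n]
    (A : Matrix m n D) (k : ℕ) (hkm : k ≤ Fintype.card m) (hkn : k ≤ Fintype.card n)
    (S : Fin k ↪ m) (T : Fin k ↪ n)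
    (hminor : IsUnit (A.submatrix ⇑S ⇑T))
    (hmax : ∀ (S' : Fin (k + 1) ↪ m) (T' : Fin (k + 1) ↪ n),
      ¬ IsUnit (A.submatrix ⇑S' ⇑T')) :
    ∀ r : n, ∃ c : Fin k → D, ∀ i : m, A i r = ∑ t, A i (T t) * c t := by
  intro r
  obtain ⟨⟨N, hNB, hBN⟩⟩ := hminor.nonempty_invertible
  refine ⟨fun t => ∑ s, N t s * A (S s) r, fun i => ?_⟩
  by_contra hne
  -- the identity holds on rows of S
  have hrowS : ∀ s : Fin k,
      ∑ t, A (S s) (T t) * ∑ s', N t s' * A (S s') r = A (S s) r := by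
    intro s
    calc ∑ t, A (S s) (T t) * ∑ s', N t s' * A (S s') r
        = ∑ s', (A.submatrix ⇑S ⇑T * N) s s' * A (S s') r := by
          simp only [Finset.mul_sum, Matrix.mul_apply, Finset.sum_mul, submatrix_apply, mul_assoc]
          exact Finset.sum_comm
      _ = A (S s) r := by rw [hBN]; simp [Matrix.one_apply]
  -- i is not in the range of S
  have hiS : ∀ s : Fin k, i ≠ S s := by
    intro s heq
    exact hne (heq ▸ (hrowS s).symm)
  -- r is not in the range of T
  have hrT : ∀ t0 : Fin k, r ≠ T t0 := by
    intro t0 heq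
    apply hne
    have hceq : ∀ t, (∑ s, N t s * A (S s) r) = (N * A.submatrix ⇑S ⇑T) t t0 := by
      intro t
      rw [Matrix.mul_apply]
      simp [heq]
    calc A i r = A i (T t0) := by rw [heq]
      _ = ∑ t, A i (T t) * (1 : Matrix (Fin k) (Fin k) D) t t0 := by
          simp [Matrix.one_apply]
      _ = ∑ t, A i (T t) * ∑ s, N t s * A (S s) r := by
          refine Finset.sum_congr rfl fun t _ => ?_
          rw [hceq t, hNB]
  -- the block matrix
  set d : D := A i r - ∑ t, A i (T t) * ∑ s, N t s * A (S s) r with hd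
  have hdne : d ≠ 0 := sub_ne_zero_of_ne hne
  have hblock : IsUnit (fromBlocks (A.submatrix ⇑S ⇑T)
      (fun s _ => A (S s) r : Matrix (Fin k) Unit D)
      (fun _ t => A i (T t) : Matrix Unit (Fin k) D)
      (fun _ _ => A i r : Matrix Unit Unit D)) := by
    have key : ∑ s', (∑ t, A i (T t) * N t s') * A (S s') r
        = ∑ t, A i (T t) * ∑ s, N t s * A (S s) r := by
      simp only [Finset.sum_mul, Finset.mul_sum, mul_assoc]
      exact Finset.sum_comm
    refine aux_isUnit_fromBlocks' _ _ _ _ N (fun _ _ => d⁻¹) hNB hBN ?_ ?_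
    · ext x y
      change (∑ _j : Unit, d⁻¹ * (A i r - ∑ s', (∑ t, A i (T t) * N t s') * A (S s') r))
        = (1 : Matrix Unit Unit D) x y
      simp only [Finset.univ_unique, Finset.sum_singleton,
        Matrix.one_apply, Subsingleton.elim x y, if_true]
      rw [key, ← hd]
      exact inv_mul_cancel₀ hdne
    · ext x y
      change (∑ _j : Unit, (A i r - ∑ s', (∑ t, A i (T t) * N t s') * A (S s') r) * d⁻¹)
        = (1 : Matrix Unit Unit D) x y
      simp only [Finset.univ_unique, Finset.sum_singleton,
        Matrix.one_apply, Subsingleton.elim x y, if_true]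
      rw [key, ← hd]
      exact mul_inv_cancel₀ hdne
  -- transfer to Fin (k+1)
  let f : Fin k ⊕ Unit → m := Sum.elim S fun _ => i
  let g : Fin k ⊕ Unit → n := Sum.elim T fun _ => r
  have hfg : A.submatrix f g = fromBlocks (A.submatrix ⇑S ⇑T)
      (fun s _ => A (S s) r) (fun _ t => A i (T t)) (fun _ _ => A i r) := by
    ext x y
    cases x <;> cases y <;> rfl
  let e : Fin (k + 1) ≃ Fin k ⊕ Unit :=
    (finSumFinEquiv.symm.trans
      (Equiv.sumCongr (Equiv.refl (Fin k)) (Equiv.ofUnique (Fin 1) Unit)))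
  have hfinj : Function.Injective (f ∘ e) := by
    refine Function.Injective.comp ?_ e.injective
    rintro (x | x) (y | y) h
    · exact congrArg Sum.inl (S.injective h)
    · exact absurd h.symm (hiS x)
    · exact absurd h (hiS y)
    · exact congrArg Sum.inr (Subsingleton.elim x y)
  have hginj : Function.Injective (g ∘ e) := by
    refine Function.Injective.comp ?_ e.injective
    rintro (x | x) (y | y) h
    · exact congrArg Sum.inl (T.injective h)
    · exact absurd h.symm (hrT x)
    · exact absurd h (hrT y)
    · exact congrArg Sum.inr (Subsingleton.elim x y)
  refine hmax ⟨f ∘ e, hfinj⟩ ⟨g ∘ e, hginj⟩ ?_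
  have hsub : A.submatrix (f ∘ e) (g ∘ e) = (A.submatrix f g).submatrix e e := by
    rw [Matrix.submatrix_submatrix]
  rw [Function.Embedding.coeFn_mk, Function.Embedding.coeFn_mk, hsub, hfg]
  exact aux_isUnit_submatrix_equiv e hblock
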